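/- Fix a finite measure μ on a measurable space W and a bounded measurable g : W → ℝ. For each λ > 0 let X_λ be a binomial random variable with parameters n_λ and p_λ where n_λ/λ² → c > 0 and p_λ/a_λ → q ∈ (0,∞) with a_λ → 0 and λ² a_λ → ∞. Then (1/(λ² a_λ)) log E[exp(s X_λ)] → c q (e^s − 1) for every s ∈ ℝ. -/
import Mathlib


open MeasureTheory Filter ENNReal

/-- The moment generating function `E[exp(s X)]` of a binomial random variable `X`
with parameters `n` and `p`. -/
noncomputable def binomMGF (n : ℕ) (p s : ℝ) : ℝ :=
  ∑ k ∈ Finset.range (n + 1),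
    (n.choose k : ℝ) * p ^ k * (1 - p) ^ (n - k) * Real.exp (s * k)

lemma binomMGF_eq (n : ℕ) (p s : ℝ) :
    binomMGF n p s = (1 + p * (Real.exp s - 1)) ^ n := by
  unfold binomMGF
  rw [show (1 + p * (Real.exp s - 1)) = (p * Real.exp s + (1 - p)) by ring, add_pow]
  refine Finset.sum_congr rfl fun k hk => ?_
  rw [mul_pow, mul_comm s (k : ℝ), Real.exp_nat_mul]
  ring

lemma one_add_pos (p t : ℝ) (hp : p ∈ Set.Icc (0:ℝ) 1) (ht : -1 < t) :
    0 < 1 + p * t := by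
  rcases le_or_gt 0 t with h | h
  · nlinarith [hp.1]
  · nlinarith [hp.2, hp.1]

/-- Scaled log-MGF limit for binomial variables: if `n_λ/λ² → c`, `p_λ/a_λ → q`,
`a_λ → 0` and `λ² a_λ → ∞`, then `(1/(λ² a_λ)) log E[exp(s X_λ)] → c q (e^s − 1)`. -/
theorem binomial_logMGF_limit (n : ℝ → ℕ) (p a : ℝ → ℝ) (c q : ℝ)
    (hc : 0 < c) (hq : 0 < q)
    (hp : ∀ l, p l ∈ Set.Icc (0 : ℝ) 1)
    (hn : Tendsto (fun l => (n l : ℝ) / l ^ 2) atTop (nhds c))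
    (hpa : Tendsto (fun l => p l / a l) atTop (nhds q))
    (ha0 : Tendsto a atTop (nhds 0))
    (hla : Tendsto (fun l => l ^ 2 * a l) atTop atTop) :
    ∀ s : ℝ,
      Tendsto (fun l => (1 / (l ^ 2 * a l)) * Real.log (binomMGF (n l) (p l) s))
        atTop (nhds (c * q * (Real.exp s - 1))) := by
  intro s
  set t : ℝ := Real.exp s - 1 with htdef
  have ht1 : -1 < t := by
    have := Real.exp_pos s; simp only [htdef]; linarith
  -- eventual positivity facts
  have hev_a : ∀ᶠ l in atTop, 0 < a l := by
    filter_upwards [hla.eventually_gt_atTop 0, eventually_gt_atTop (0:ℝ)] with l h1 h2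
    have hl2 : (0:ℝ) < l ^ 2 := by positivity
    nlinarith
  have hev_p : ∀ᶠ l in atTop, 0 < p l := by
    filter_upwards [hpa.eventually_const_lt (half_lt_self hq), hev_a] with l h1 h2
    have : 0 < p l / a l := lt_trans (half_pos hq) h1
    exact (div_pos_iff.mp this).resolve_right (fun h => absurd h.2 (not_lt.mpr h2.le)) |>.1
  -- p → 0
  have hp0 : Tendsto p atTop (nhds 0) := by
    have : Tendsto (fun l => (p l / a l) * a l) atTop (nhds (q * 0)) := hpa.mul ha0
    rw [mul_zero] at this
    refine this.congr' ?_
    filter_upwards [hev_a] with l h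
    rw [div_mul_cancel₀ _ (ne_of_gt h)]
  by_cases ht0 : t = 0
  · -- s = 0 case: MGF ≡ 1
    have : (fun l => (1 / (l ^ 2 * a l)) * Real.log (binomMGF (n l) (p l) s))
        = fun _ => 0 := by
      funext l
      rw [binomMGF_eq, ← htdef, ht0]
      simp
    rw [this, show c * q * t = 0 by rw [ht0, mul_zero]]
    exact tendsto_const_nhds
  -- main case t ≠ 0
  have hslope : Tendsto (slope Real.log 1) (nhdsWithin 1 {(1:ℝ)}ᶜ) (nhds 1) := by
    have := hasDerivAt_iff_tendsto_slope.mp (Real.hasDerivAt_log one_ne_zero)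
    simpa using this
  have harg : Tendsto (fun l => 1 + p l * t) atTop (nhdsWithin 1 {(1:ℝ)}ᶜ) := by
    rw [tendsto_nhdsWithin_iff]
    constructor
    · have : Tendsto (fun l => 1 + p l * t) atTop (nhds (1 + 0 * t)) :=
        tendsto_const_nhds.add (hp0.mul_const t)
      simpa using this
    · filter_upwards [hev_p] with l h
      simp only [Set.mem_compl_iff, Set.mem_singleton_iff]
      intro hcon
      have : p l * t = 0 := by linarith
      exact ht0 ((mul_eq_zero.mp this).resolve_left (ne_of_gt h))
  have hratio : Tendsto (fun l => Real.log (1 + p l * t) / (p l * t)) atTop (nhds 1) := by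
    have := hslope.comp harg
    refine this.congr fun l => ?_
    simp [slope_def_field, Real.log_one]
  have hpt : Tendsto (fun l => (p l * t) / a l) atTop (nhds (q * t)) := by
    have := hpa.mul_const t
    refine this.congr fun l => ?_
    rw [mul_div_right_comm]
  have hL : Tendsto (fun l => Real.log (1 + p l * t) / a l) atTop (nhds (q * t)) := by
    have := hratio.mul hpt
    rw [one_mul] at this
    refine this.congr' ?_
    filter_upwards [hev_p, hev_a] with l h1 h2
    have hpt0 : p l * t ≠ 0 := mul_ne_zero (ne_of_gt h1) ht0
    field_simp
  have hmain := hn.mul hL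
  rw [show c * (q * t) = c * q * t by ring] at hmain
  refine hmain.congr' ?_
  filter_upwards [hev_a, eventually_gt_atTop (0:ℝ)] with l h1 h2
  rw [binomMGF_eq, ← htdef, Real.log_pow]
  have hl2 : (l:ℝ) ^ 2 ≠ 0 := by positivity
  field_simp
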